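/- For all a, b > 0 with a ≠ b, S(a,b) - N₁(a,b) ≤ (9/10)·(S(a,b) - L(a,b)), where S(a,b) = √((a²+b²)/2), N₁(a,b) = ((√a+√b)/2)², and L is the logarithmic mean. -/

import Mathlib

lemma aux_log_lower (x : ℝ) (hx : 1 ≤ x) :
    3 * (x ^ 2 - 1) / (x ^ 2 + 4 * x + 1) ≤ Real.log x := by
  have hder : ∀ y : ℝ, 1 < y → HasDerivAt
      (fun y : ℝ => Real.log y - 3 * (y ^ 2 - 1) / (y ^ 2 + 4 * y + 1))
      (y⁻¹ - ((6 * y) * (y ^ 2 + 4 * y + 1) - 3 * (y ^ 2 - 1) * (2 * y + 4)) /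
        (y ^ 2 + 4 * y + 1) ^ 2) y := by
    intro y hy
    have hy0 : y ≠ 0 := by linarith
    have hq : y ^ 2 + 4 * y + 1 ≠ 0 := by nlinarith
    have h1 := Real.hasDerivAt_log hy0
    have h2 : HasDerivAt (fun y : ℝ => 3 * (y ^ 2 - 1)) (6 * y) y := by
      have := ((hasDerivAt_pow 2 y).sub_const 1).const_mul (3 : ℝ)
      exact this.congr_deriv (by ring)
    have h3 : HasDerivAt (fun y : ℝ => y ^ 2 + 4 * y + 1) (2 * y + 4) y := by
      have := (((hasDerivAt_pow 2 y).add ((hasDerivAt_id y).const_mul (4 : ℝ))).add_const 1)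
      exact this.congr_deriv (by ring)
    exact h1.sub (h2.div h3 hq)
  have hmono : MonotoneOn (fun y : ℝ => Real.log y - 3 * (y ^ 2 - 1) / (y ^ 2 + 4 * y + 1))
      (Set.Ici (1:ℝ)) := by
    apply monotoneOn_of_deriv_nonneg (convex_Ici 1)
    · apply ContinuousOn.sub
      · apply Real.continuousOn_log.mono
        intro y hy
        simp only [Set.mem_Ici] at hy
        simp only [Set.mem_compl_iff, Set.mem_singleton_iff]
        intro h; rw [h] at hy; linarith
      · apply ContinuousOn.div (by fun_prop) (by fun_prop)
        intro y hy
        simp only [Set.mem_Ici] at hy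
        nlinarith
    · intro y hy
      rw [interior_Ici, Set.mem_Ioi] at hy
      exact (hder y hy).differentiableAt.differentiableWithinAt
    · intro y hy
      rw [interior_Ici, Set.mem_Ioi] at hy
      rw [(hder y hy).deriv]
      have hy0 : (0:ℝ) < y := by linarith
      have hq : (0:ℝ) < y ^ 2 + 4 * y + 1 := by nlinarith
      rw [sub_nonneg, inv_eq_one_div, div_le_div_iff₀ (by positivity) hy0]
      nlinarith [sq_nonneg ((y - 1) ^ 2)]
  have h1 : (fun y : ℝ => Real.log y - 3 * (y ^ 2 - 1) / (y ^ 2 + 4 * y + 1)) 1 ≤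
      (fun y : ℝ => Real.log y - 3 * (y ^ 2 - 1) / (y ^ 2 + 4 * y + 1)) x :=
    hmono (by simp) (by simpa using hx) hx
  simp only [Real.log_one] at h1
  norm_num at h1
  linarith

lemma aux_L_le (a b : ℝ) (ha : 0 < a) (hab : a < b) :
    (b - a) / (Real.log b - Real.log a) ≤ (a + b + 4 * Real.sqrt (a * b)) / 6 := by
  have hb : 0 < b := ha.trans hab
  set u := Real.sqrt a with hu
  set v := Real.sqrt b with hv
  have hu0 : 0 < u := Real.sqrt_pos.mpr ha
  have hv0 : 0 < v := Real.sqrt_pos.mpr hb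
  have huv : u < v := Real.sqrt_lt_sqrt ha.le hab
  have hG : Real.sqrt (a * b) = u * v := Real.sqrt_mul ha.le b
  have hu2 : u ^ 2 = a := Real.sq_sqrt ha.le
  have hv2 : v ^ 2 = b := Real.sq_sqrt hb.le
  have hx1 : 1 < v / u := (one_lt_div hu0).mpr huv
  have hlog : Real.log b - Real.log a = 2 * Real.log (v / u) := by
    rw [Real.log_div hv0.ne' hu0.ne', hu, hv, Real.log_sqrt ha.le, Real.log_sqrt hb.le]
    ring
  have hlogpos : 0 < Real.log b - Real.log a := by
    have := Real.log_pos hx1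
    rw [hlog]; linarith
  have hkey := aux_log_lower (v / u) hx1.le
  rw [div_le_div_iff₀ hlogpos (by norm_num)]
  rw [hG, hlog, ← hu2, ← hv2]
  have hD : (0:ℝ) < u ^ 2 + v ^ 2 + 4 * (u * v) := by positivity
  have e1 : 3 * ((v / u) ^ 2 - 1) / ((v / u) ^ 2 + 4 * (v / u) + 1)
      = 3 * (v ^ 2 - u ^ 2) / (u ^ 2 + v ^ 2 + 4 * (u * v)) := by
    have hu' : u ≠ 0 := hu0.ne'
    have hq1 : (v / u) ^ 2 + 4 * (v / u) + 1 ≠ 0 := by positivity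
    have hq2 : u ^ 2 + v ^ 2 + 4 * (u * v) ≠ 0 := by positivity
    field_simp
    ring
  rw [e1] at hkey
  have h2 := mul_le_mul_of_nonneg_left hkey hD.le
  rw [mul_div_cancel₀ _ hD.ne'] at h2
  calc (v ^ 2 - u ^ 2) * 6 ≤ 2 * ((u ^ 2 + v ^ 2 + 4 * (u * v)) * Real.log (v / u)) := by
        linarith
    _ = (u ^ 2 + v ^ 2 + 4 * (u * v)) * (2 * Real.log (v / u)) := by ring

lemma aux_main (a b : ℝ) (ha : 0 < a) (hb : 0 < b) (h : a < b) :
    Real.sqrt ((a ^ 2 + b ^ 2) / 2) - ((Real.sqrt a + Real.sqrt b) / 2) ^ 2 ≤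
      (9 / 10) * (Real.sqrt ((a ^ 2 + b ^ 2) / 2) -
        (b - a) / (Real.log b - Real.log a)) := by
  set G := Real.sqrt (a * b) with hGdef
  have hGnn : 0 ≤ G := Real.sqrt_nonneg _
  have hG2 : G ^ 2 = a * b := Real.sq_sqrt (by positivity)
  have hGA : G ≤ (a + b) / 2 := by nlinarith [sq_nonneg (a - b)]
  have hS : Real.sqrt ((a ^ 2 + b ^ 2) / 2) ≤ a + b - G := by
    have h1 : (a ^ 2 + b ^ 2) / 2 ≤ (a + b - G) ^ 2 := by
      nlinarith [sq_nonneg ((a + b) / 2 - G)]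
    calc Real.sqrt ((a ^ 2 + b ^ 2) / 2) ≤ Real.sqrt ((a + b - G) ^ 2) :=
          Real.sqrt_le_sqrt h1
      _ = a + b - G := Real.sqrt_sq (by linarith)
  have hmul : G = Real.sqrt a * Real.sqrt b := Real.sqrt_mul ha.le b
  have hsa : Real.sqrt a ^ 2 = a := Real.sq_sqrt ha.le
  have hsb : Real.sqrt b ^ 2 = b := Real.sq_sqrt hb.le
  have hN : ((Real.sqrt a + Real.sqrt b) / 2) ^ 2 = (a + b + 2 * G) / 4 := by
    have e : ((Real.sqrt a + Real.sqrt b) / 2) ^ 2 =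
        (Real.sqrt a ^ 2 + Real.sqrt b ^ 2 + 2 * (Real.sqrt a * Real.sqrt b)) / 4 := by
      ring
    rw [e, hsa, hsb, ← hmul]
  have hL := aux_L_le a b ha h
  rw [hN]
  linarith

theorem MSN1_le_MSL (a b : ℝ) (ha : 0 < a) (hb : 0 < b) (hab : a ≠ b) :
    Real.sqrt ((a ^ 2 + b ^ 2) / 2) - ((Real.sqrt a + Real.sqrt b) / 2) ^ 2 ≤
      (9 / 10) * (Real.sqrt ((a ^ 2 + b ^ 2) / 2) -
        (b - a) / (Real.log b - Real.log a)) := by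
  rcases lt_or_gt_of_ne hab with h | h
  · exact aux_main a b ha hb h
  · have this := aux_main b a hb ha h
    have e1 : (b ^ 2 + a ^ 2) / 2 = (a ^ 2 + b ^ 2) / 2 := by ring
    have e2 : Real.sqrt b + Real.sqrt a = Real.sqrt a + Real.sqrt b := add_comm _ _
    have e3 : (a - b) / (Real.log a - Real.log b) = (b - a) / (Real.log b - Real.log a) := by
      rw [← neg_div_neg_eq]
      ring_nf
    rw [e1, e2, e3] at this
    exact this
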